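/- Let m : ℝ → ℝ be any function such that for every t ∈ [0, 27/256] one has m(t) ∈ [1, 4/3] and m(t) = 1 + t·m(t)⁴, set u(t) = m(t) − 1 and B(t) = (4 − 6u(t))·u(t)² / ((1 − u(t))(1 − 2u(t))(1 − 3u(t))). Then B(t)·√(1 − 256t/27) tends to 1/(3·√(8/27)) = √(3/8) as t tends to 27/256 from the left; i.e. the generating function of broken chains diverges like an inverse square root at the critical point while the other chain generating functions stay finite. -/

import Mathlib

private noncomputable def gfun : ℝ → ℝ := fun x =>
  (4 - 6 * (x - 1)) * (x - 1) ^ 2 * Real.sqrt (3 * (x - 1) ^ 2 + 14 * (x - 1) + 27) /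
    ((1 - (x - 1)) * (1 - 2 * (x - 1)) * Real.sqrt 27 * (1 + (x - 1)) ^ 2)

private lemma gfun_cont : ContinuousAt gfun (4/3) := by
  apply ContinuousAt.div
  · fun_prop
  · fun_prop
  · have h27 : (0:ℝ) < Real.sqrt 27 := Real.sqrt_pos.mpr (by norm_num)
    norm_num

private lemma gfun_val : gfun (4/3) = Real.sqrt (3/8) := by
  unfold gfun
  norm_num
  have h1 : Real.sqrt 32 * Real.sqrt 8 = 16 := by
    rw [← Real.sqrt_mul (by norm_num), show (32:ℝ)*8 = 16^2 by norm_num, Real.sqrt_sq (by norm_num)]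
  have h2 : Real.sqrt 27 * Real.sqrt 3 = 9 := by
    rw [← Real.sqrt_mul (by norm_num), show (27:ℝ)*3 = 9^2 by norm_num, Real.sqrt_sq (by norm_num)]
  have h8 : (0:ℝ) < Real.sqrt 8 := Real.sqrt_pos.mpr (by norm_num)
  have h27 : (0:ℝ) < Real.sqrt 27 := Real.sqrt_pos.mpr (by norm_num)
  rw [div_eq_div_iff (by positivity) (ne_of_gt h8)]
  linear_combination (2/9) * h1 - (32/81) * h2

private lemma key_ineq (t u : ℝ) (hu0 : 0 ≤ u) (hu1 : u ≤ 1/3)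
    (h : t * (1+u)^4 = u) : (1-3*u)^2 ≤ 65536/2187 * (27/256 - t) := by
  have key : (27/256 - t) * (1+u)^4 = (1-3*u)^2 * (3*u^2+14*u+27) / 256 := by
    linear_combination (-(1:ℝ)) * h
  have h4 : (0:ℝ) < (1+u)^4 := by positivity
  have h4' : (1+u)^4 ≤ 256/81 := by
    have := pow_le_pow_left₀ (by linarith : (0:ℝ) ≤ 1+u) (by linarith : 1+u ≤ 4/3) 4
    nlinarith [this]
  have hA : (27:ℝ) ≤ 3*u^2+14*u+27 := by nlinarith
  have htc : 0 ≤ 27/256 - t := by nlinarith [sq_nonneg (1-3*u)]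
  nlinarith [mul_le_mul_of_nonneg_left h4' htc, sq_nonneg (1-3*u)]

/-- The generating function of broken chains
`B(t) = (4 − 6U)·U² / ((1 − U)(1 − 2U)(1 − 3U))` with `U = m(t) − 1`, where `m` solves
the melonic equation in `[1, 4/3]`, diverges like an inverse square root at `t_c = 27/256`:
`B(t)·√(1 − 256·t/27) → √(3/8)` as `t → (27/256)⁻`. -/
theorem broken_chain_sqrt_divergence (m : ℝ → ℝ)
    (hm : ∀ t ∈ Set.Icc (0 : ℝ) (27 / 256),
      m t ∈ Set.Icc (1 : ℝ) (4 / 3) ∧ m t = 1 + t * (m t) ^ 4) :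
    Filter.Tendsto
      (fun t : ℝ =>
        ((4 - 6 * (m t - 1)) * (m t - 1) ^ 2 /
            ((1 - (m t - 1)) * (1 - 2 * (m t - 1)) * (1 - 3 * (m t - 1)))) *
          Real.sqrt (1 - 256 * t / 27))
      (nhdsWithin (27 / 256) (Set.Iio (27 / 256)))
      (nhds (Real.sqrt (3 / 8))) := by
  have hmem : Set.Ioo (0:ℝ) (27/256) ∈ nhdsWithin (27/256) (Set.Iio (27/256)) := by
    rw [mem_nhdsWithin]
    exact ⟨Set.Ioi 0, isOpen_Ioi, by norm_num, fun x hx => ⟨hx.1, hx.2⟩⟩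
  -- basic facts for t in Ioo
  have hfacts : ∀ t ∈ Set.Ioo (0:ℝ) (27/256),
      0 ≤ m t - 1 ∧ m t - 1 < 1/3 ∧ t * (1 + (m t - 1))^4 = m t - 1 := by
    intro t ht
    obtain ⟨⟨hm1, hm2⟩, heq⟩ := hm t ⟨le_of_lt ht.1, le_of_lt ht.2⟩
    refine ⟨by linarith, ?_, ?_⟩
    · by_contra hcon
      push_neg at hcon
      have hu : m t - 1 = 1/3 := le_antisymm (by linarith) hcon
      have : m t = 4/3 := by linarith
      rw [this] at heq
      norm_num at heq
      linarith [ht.2]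
    · have : (1 + (m t - 1)) = m t := by ring
      rw [this]
      linarith [heq]
  -- Step 1: m t → 4/3
  have hmt : Filter.Tendsto m (nhdsWithin (27/256) (Set.Iio (27/256))) (nhds (4/3)) := by
    rw [Metric.tendsto_nhdsWithin_nhds]
    intro ε hε
    refine ⟨min (27/256) (2187/65536 * (9 * ε^2)), by positivity, ?_⟩
    intro t ht hd
    have hlt : t < 27/256 := ht
    have hgt : 0 < t := by
      rw [Real.dist_eq, abs_lt] at hd
      have := lt_min_iff.mp (by linarith [hd.1] : 27/256 - t < min (27/256) (2187/65536 * (9 * ε^2)))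
      linarith [this.1]
    obtain ⟨hu0, hu1, hteq⟩ := hfacts t ⟨hgt, hlt⟩
    have hki := key_ineq t (m t - 1) hu0 (le_of_lt hu1) hteq
    rw [Real.dist_eq, abs_lt] at hd
    have hd2 : 27/256 - t < 2187/65536 * (9 * ε^2) := by
      have := lt_min_iff.mp (by linarith [hd.1] : 27/256 - t < min (27/256) (2187/65536 * (9 * ε^2)))
      exact this.2
    have hsq : (1 - 3*(m t - 1))^2 < 9 * ε^2 := by nlinarith
    have h13 : 0 ≤ 1 - 3*(m t - 1) := by linarith
    have : 1 - 3*(m t - 1) < 3 * ε := by nlinarith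
    rw [Real.dist_eq, abs_lt]
    obtain ⟨⟨hm1, hm2⟩, _⟩ := hm t ⟨le_of_lt hgt, le_of_lt hlt⟩
    constructor <;> [linarith; linarith]
  -- Step 3: composed tendsto
  have hcomp : Filter.Tendsto (fun t => gfun (m t))
      (nhdsWithin (27/256) (Set.Iio (27/256))) (nhds (Real.sqrt (3/8))) := by
    rw [← gfun_val]
    exact gfun_cont.tendsto.comp hmt
  -- Step 2: eventual equality
  refine hcomp.congr' ?_
  filter_upwards [hmem] with t ht
  obtain ⟨hu0, hu1, hteq⟩ := hfacts t ⟨ht.1, ht.2⟩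
  set u := m t - 1 with hu
  have hA : (0:ℝ) ≤ 3*u^2+14*u+27 := by nlinarith
  have h27 : (0:ℝ) < Real.sqrt 27 := Real.sqrt_pos.mpr (by norm_num)
  have h1u : (0:ℝ) < 1+u := by linarith
  have hX0 : 0 ≤ (1-3*u) * Real.sqrt (3*u^2+14*u+27) / (Real.sqrt 27 * (1+u)^2) :=
    div_nonneg (mul_nonneg (by linarith) (Real.sqrt_nonneg _)) (by positivity)
  have hXsq : ((1-3*u) * Real.sqrt (3*u^2+14*u+27) / (Real.sqrt 27 * (1+u)^2))^2
      = 1 - 256*t/27 := by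
    have e1 : Real.sqrt (3*u^2+14*u+27) ^ 2 = 3*u^2+14*u+27 := Real.sq_sqrt hA
    have e2 : Real.sqrt 27 ^ 2 = 27 := Real.sq_sqrt (by norm_num)
    rw [div_pow, mul_pow, mul_pow, e1, e2, div_eq_iff (by positivity)]
    linear_combination (256:ℝ) * hteq
  have hs : Real.sqrt (1 - 256*t/27)
      = (1-3*u) * Real.sqrt (3*u^2+14*u+27) / (Real.sqrt 27 * (1+u)^2) := by
    rw [← hXsq, Real.sqrt_sq hX0]
  show gfun (m t) = _
  unfold gfun
  rw [hs, ← hu]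
  have d1 : (1:ℝ) - u ≠ 0 := by linarith
  have d2 : (1:ℝ) - 2*u ≠ 0 := by linarith
  have d3 : (1:ℝ) - 3*u ≠ 0 := by linarith
  field_simp
  rw [mul_div_mul_right _ _ (by linarith : (1:ℝ) - u * 3 ≠ 0)]
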